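/- Let A, B, C be finite-dimensional real vector spaces, D = A×B×C, C(D) the associated quotient space and X(D) the space of double-linear functions on D. The bilinear pairing ⟨[d], σ⟩ := σ(d) for d ∈ D, σ ∈ X(D) is well-defined on C(D) × X(D) and is nondegenerate. -/

import Mathlib

open Function Module

open Function Module

/-- A function on `A × B × C` is double-linear if it is linear in `(b, c)` for
each fixed `a`, and linear in `(a, c)` for each fixed `b`. -/
def IsDoubleLinear (A B C : Type*) [AddCommGroup A] [Module ℝ A]
    [AddCommGroup B] [Module ℝ B] [AddCommGroup C] [Module ℝ C]
    (σ : A × B × C → ℝ) : Prop :=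
  (∀ (a : A) (b₁ b₂ : B) (c₁ c₂ : C) (r : ℝ),
      σ (a, r • b₁ + b₂, r • c₁ + c₂) = r * σ (a, b₁, c₁) + σ (a, b₂, c₂)) ∧
  (∀ (a₁ a₂ : A) (b : B) (c₁ c₂ : C) (r : ℝ),
      σ (r • a₁ + a₂, b, r • c₁ + c₂) = r * σ (a₁, b, c₁) + σ (a₂, b, c₂))

/-- The space `X(D)` of double-linear functions on `D = A × B × C`. -/
def XD (A B C : Type*) [AddCommGroup A] [Module ℝ A]
    [AddCommGroup B] [Module ℝ B] [AddCommGroup C] [Module ℝ C] :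
    Submodule ℝ ((A × B × C) → ℝ) where
  carrier := {σ | IsDoubleLinear A B C σ}
  add_mem' := by
    rintro σ τ ⟨h1, h2⟩ ⟨g1, g2⟩
    refine ⟨fun a b₁ b₂ c₁ c₂ r => ?_, fun a₁ a₂ b c₁ c₂ r => ?_⟩
    · simp only [Pi.add_apply, h1 a b₁ b₂ c₁ c₂ r, g1 a b₁ b₂ c₁ c₂ r]; ring
    · simp only [Pi.add_apply, h2 a₁ a₂ b c₁ c₂ r, g2 a₁ a₂ b c₁ c₂ r]; ring
  zero_mem' :=
    ⟨fun _ _ _ _ _ _ => by simp, fun _ _ _ _ _ _ => by simp⟩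
  smul_mem' := by
    rintro t σ ⟨h1, h2⟩
    refine ⟨fun a b₁ b₂ c₁ c₂ r => ?_, fun a₁ a₂ b c₁ c₂ r => ?_⟩
    · simp only [Pi.smul_apply, smul_eq_mul, h1 a b₁ b₂ c₁ c₂ r]; ring
    · simp only [Pi.smul_apply, smul_eq_mul, h2 a₁ a₂ b c₁ c₂ r]; ring


/-- The double-vector-bundle relation elements inside the free vector space on
`D = A × B × C`. -/
abbrev RelSet (A B C : Type*) [AddCommGroup A] [Module ℝ A]
    [AddCommGroup B] [Module ℝ B] [AddCommGroup C] [Module ℝ C] :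
    Set ((A × B × C) →₀ ℝ) :=
  {f | (∃ (a : A) (b₁ b₂ : B) (c₁ c₂ : C),
          f = Finsupp.single (a, b₁, c₁) 1 + Finsupp.single (a, b₂, c₂) 1
              - Finsupp.single (a, b₁ + b₂, c₁ + c₂) 1) ∨
       (∃ (a₁ a₂ : A) (b : B) (c₁ c₂ : C),
          f = Finsupp.single (a₁, b, c₁) 1 + Finsupp.single (a₂, b, c₂) 1
              - Finsupp.single (a₁ + a₂, b, c₁ + c₂) 1) ∨
       (∃ (a : A) (b : B) (c : C) (r : ℝ),
          f = r • Finsupp.single (a, b, c) 1 - Finsupp.single (a, r • b, r • c) 1) ∨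
       (∃ (a : A) (b : B) (c : C) (r : ℝ),
          f = r • Finsupp.single (a, b, c) 1 - Finsupp.single (r • a, b, r • c) 1)}

section Aux

open TensorProduct Finsupp Submodule

variable (A B C : Type*) [AddCommGroup A] [Module ℝ A]
  [AddCommGroup B] [Module ℝ B] [AddCommGroup C] [Module ℝ C]

noncomputable def evAux : ((A × B × C) →₀ ℝ) →ₗ[ℝ] (XD A B C →ₗ[ℝ] ℝ) :=
  Finsupp.linearCombination ℝ
    (fun d => (LinearMap.proj d).comp (XD A B C).subtype)

lemma evAux_single (d : A × B × C) (σ : XD A B C) :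
    evAux A B C (Finsupp.single d 1) σ = (σ : (A × B × C) → ℝ) d := by
  simp [evAux]

noncomputable def QAux : ((A × B × C) →₀ ℝ) →ₗ[ℝ] (A ⊗[ℝ] B) × C :=
  Finsupp.linearCombination ℝ
    (fun d : A × B × C => (d.1 ⊗ₜ[ℝ] d.2.1, d.2.2))

lemma QAux_single (d : A × B × C) :
    QAux A B C (Finsupp.single d 1) = (d.1 ⊗ₜ[ℝ] d.2.1, d.2.2) := by
  simp [QAux]

lemma sigma_a00 (σ : XD A B C) (a : A) :
    (σ : (A × B × C) → ℝ) (a, 0, 0) = 0 := by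
  have h := σ.2.1 a 0 0 0 0 1
  simp only [one_smul, add_zero, one_mul] at h
  linarith

lemma sigma_0b0 (σ : XD A B C) (b : B) :
    (σ : (A × B × C) → ℝ) (0, b, 0) = 0 := by
  have h := σ.2.2 0 0 b 0 0 1
  simp only [one_smul, add_zero, one_mul] at h
  linarith

lemma hspan_ev : Submodule.span ℝ (RelSet A B C) ≤ LinearMap.ker (evAux A B C) := by
  rw [Submodule.span_le]
  rintro f (⟨a,b₁,b₂,c₁,c₂,rfl⟩|⟨a₁,a₂,b,c₁,c₂,rfl⟩|⟨a,b,c,r,rfl⟩|⟨a,b,c,r,rfl⟩) <;>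
    (simp only [SetLike.mem_coe, LinearMap.mem_ker]; ext σ;
     simp only [map_add, map_sub, map_smul, LinearMap.add_apply, LinearMap.sub_apply,
       LinearMap.smul_apply, evAux_single, LinearMap.zero_apply, smul_eq_mul])
  · have h := σ.2.1 a b₁ b₂ c₁ c₂ 1
    simp only [one_smul, one_mul] at h
    linarith
  · have h := σ.2.2 a₁ a₂ b c₁ c₂ 1
    simp only [one_smul, one_mul] at h
    linarith
  · have h := σ.2.1 a b 0 c 0 r
    simp only [add_zero] at h
    have h0 := sigma_a00 A B C σ a
    linarith
  · have h := σ.2.2 a 0 b c 0 r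
    simp only [add_zero] at h
    have h0 := sigma_0b0 A B C σ b
    linarith

lemma hspan_Q : Submodule.span ℝ (RelSet A B C) ≤ LinearMap.ker (QAux A B C) := by
  rw [Submodule.span_le]
  rintro f (⟨a,b₁,b₂,c₁,c₂,rfl⟩|⟨a₁,a₂,b,c₁,c₂,rfl⟩|⟨a,b,c,r,rfl⟩|⟨a,b,c,r,rfl⟩) <;>
    (simp only [SetLike.mem_coe, LinearMap.mem_ker, map_add, map_sub, map_smul,
       QAux_single, Prod.ext_iff, Prod.fst_add, Prod.snd_add, Prod.fst_sub, Prod.snd_sub,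
       Prod.smul_fst, Prod.smul_snd, TensorProduct.tmul_add, TensorProduct.add_tmul,
       TensorProduct.tmul_smul, TensorProduct.smul_tmul', Prod.fst_zero, Prod.snd_zero]) <;>
    constructor <;> abel

-- quotient relations
lemma q1 (a : A) (b₁ b₂ : B) (c₁ c₂ : C) :
    (Submodule.Quotient.mk (Finsupp.single (a,b₁,c₁) 1)
      + Submodule.Quotient.mk (Finsupp.single (a,b₂,c₂) 1) :
      ((A × B × C) →₀ ℝ) ⧸ Submodule.span ℝ (RelSet A B C))
    = Submodule.Quotient.mk (Finsupp.single (a,b₁+b₂,c₁+c₂) 1) := by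
  rw [← Submodule.Quotient.mk_add, Submodule.Quotient.eq]
  exact Submodule.subset_span (Or.inl ⟨a,b₁,b₂,c₁,c₂, rfl⟩)

lemma q2 (a₁ a₂ : A) (b : B) (c₁ c₂ : C) :
    (Submodule.Quotient.mk (Finsupp.single (a₁,b,c₁) 1)
      + Submodule.Quotient.mk (Finsupp.single (a₂,b,c₂) 1) :
      ((A × B × C) →₀ ℝ) ⧸ Submodule.span ℝ (RelSet A B C))
    = Submodule.Quotient.mk (Finsupp.single (a₁+a₂,b,c₁+c₂) 1) := by
  rw [← Submodule.Quotient.mk_add, Submodule.Quotient.eq]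
  exact Submodule.subset_span (Or.inr (Or.inl ⟨a₁,a₂,b,c₁,c₂, rfl⟩))

lemma q3 (a : A) (b : B) (c : C) (r : ℝ) :
    (r • Submodule.Quotient.mk (Finsupp.single (a,b,c) 1) :
      ((A × B × C) →₀ ℝ) ⧸ Submodule.span ℝ (RelSet A B C))
    = Submodule.Quotient.mk (Finsupp.single (a, r•b, r•c) 1) := by
  rw [← Submodule.Quotient.mk_smul, Submodule.Quotient.eq]
  exact Submodule.subset_span (Or.inr (Or.inr (Or.inl ⟨a,b,c,r, rfl⟩)))

lemma q4 (a : A) (b : B) (c : C) (r : ℝ) :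
    (r • Submodule.Quotient.mk (Finsupp.single (a,b,c) 1) :
      ((A × B × C) →₀ ℝ) ⧸ Submodule.span ℝ (RelSet A B C))
    = Submodule.Quotient.mk (Finsupp.single (r•a, b, r•c) 1) := by
  rw [← Submodule.Quotient.mk_smul, Submodule.Quotient.eq]
  exact Submodule.subset_span (Or.inr (Or.inr (Or.inr ⟨a,b,c,r, rfl⟩)))

lemma q_a00 (a : A) :
    (Submodule.Quotient.mk (Finsupp.single (a,(0:B),(0:C)) 1) :
      ((A × B × C) →₀ ℝ) ⧸ Submodule.span ℝ (RelSet A B C)) = 0 := by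
  have h := q3 A B C a 0 0 0
  simpa using h.symm

noncomputable def bilAux : A →ₗ[ℝ] B →ₗ[ℝ]
    (((A × B × C) →₀ ℝ) ⧸ Submodule.span ℝ (RelSet A B C)) :=
  LinearMap.mk₂ ℝ (fun a b => Submodule.Quotient.mk (Finsupp.single (a,b,0) 1))
    (fun a₁ a₂ b => by simpa using (q2 A B C a₁ a₂ b 0 0).symm)
    (fun r a b => by simpa using (q4 A B C a b 0 r).symm)
    (fun a b₁ b₂ => by simpa using (q1 A B C a b₁ b₂ 0 0).symm)
    (fun r a b => by simpa using (q3 A B C a b 0 r).symm)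

noncomputable def linCAux : C →ₗ[ℝ]
    (((A × B × C) →₀ ℝ) ⧸ Submodule.span ℝ (RelSet A B C)) where
  toFun c := Submodule.Quotient.mk (Finsupp.single ((0:A),(0:B),c) 1)
  map_add' c₁ c₂ := by simpa using (q1 A B C 0 0 0 c₁ c₂).symm
  map_smul' r c := by simpa using (q3 A B C 0 0 c r).symm

noncomputable def SAux : ((A ⊗[ℝ] B) × C) →ₗ[ℝ]
    (((A × B × C) →₀ ℝ) ⧸ Submodule.span ℝ (RelSet A B C)) :=
  (TensorProduct.lift (bilAux A B C)).coprod (linCAux A B C)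

lemma qsplit (a : A) (b : B) (c : C) :
    (Submodule.Quotient.mk (Finsupp.single (a,b,c) 1) :
      ((A × B × C) →₀ ℝ) ⧸ Submodule.span ℝ (RelSet A B C))
    = Submodule.Quotient.mk (Finsupp.single (a,b,0) 1)
      + Submodule.Quotient.mk (Finsupp.single (0,0,c) 1) := by
  have h1 := q1 A B C a b 0 0 c
  have h2 := q2 A B C a 0 0 0 c
  have h3 := q_a00 A B C a
  simp only [add_zero, zero_add] at h1 h2
  rw [← h1, ← h2, h3, zero_add]

lemma S_Q (f : (A × B × C) →₀ ℝ) :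
    SAux A B C (QAux A B C f) = Submodule.Quotient.mk f := by
  induction f using Finsupp.induction_linear with
  | zero => simp
  | add f g hf hg => rw [map_add, map_add, hf, hg, Submodule.Quotient.mk_add]
  | single d r =>
    obtain ⟨a,b,c⟩ := d
    have hs : Finsupp.single ((a,b,c) : A × B × C) r
        = r • Finsupp.single ((a,b,c) : A × B × C) 1 := by
      rw [Finsupp.smul_single', mul_one]
    rw [hs, map_smul, map_smul, Submodule.Quotient.mk_smul]
    congr 1
    rw [QAux_single]
    show TensorProduct.lift (bilAux A B C) (a ⊗ₜ[ℝ] b) + linCAux A B C c = _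
    rw [TensorProduct.lift.tmul]
    exact (qsplit A B C a b c).symm

end Aux

theorem stmt9 (A B C : Type*)
    [AddCommGroup A] [Module ℝ A] [FiniteDimensional ℝ A]
    [AddCommGroup B] [Module ℝ B] [FiniteDimensional ℝ B]
    [AddCommGroup C] [Module ℝ C] [FiniteDimensional ℝ C] :
    ∃ P : (((A × B × C) →₀ ℝ) ⧸ Submodule.span ℝ (RelSet A B C)) →ₗ[ℝ]
        (XD A B C →ₗ[ℝ] ℝ),
      (∀ (d : A × B × C) (σ : XD A B C),
        P (Submodule.Quotient.mk (Finsupp.single d 1)) σ = (σ : (A × B × C) → ℝ) d) ∧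
      (∀ ω, (∀ σ, P ω σ = 0) → ω = 0) ∧
      (∀ σ, (∀ ω, P ω σ = 0) → σ = 0) := by
  classical
  refine ⟨Submodule.liftQ _ (evAux A B C) (hspan_ev A B C), ?_, ?_, ?_⟩
  · intro d σ
    rw [Submodule.liftQ_apply, evAux_single]
  · intro ω hω
    obtain ⟨f, rfl⟩ := Submodule.Quotient.mk_surjective _ ω
    have hQ : QAux A B C f = 0 := by
      rw [← Module.forall_dual_apply_eq_zero_iff ℝ]
      intro φ
      set σφ : (A × B × C) → ℝ := fun d => φ (d.1 ⊗ₜ[ℝ] d.2.1, d.2.2) with hσφ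
      have hmem : σφ ∈ XD A B C := by
        constructor
        · intro a b₁ b₂ c₁ c₂ r
          have he : ((a ⊗ₜ[ℝ] (r • b₁ + b₂), r • c₁ + c₂) : (TensorProduct ℝ A B) × C)
              = r • (a ⊗ₜ[ℝ] b₁, c₁) + (a ⊗ₜ[ℝ] b₂, c₂) := by
            simp [TensorProduct.tmul_add, TensorProduct.tmul_smul, Prod.ext_iff]
          simp only [hσφ, he, map_add, map_smul, smul_eq_mul]
        · intro a₁ a₂ b c₁ c₂ r
          have he : (((r • a₁ + a₂) ⊗ₜ[ℝ] b, r • c₁ + c₂) : (TensorProduct ℝ A B) × C)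
              = r • (a₁ ⊗ₜ[ℝ] b, c₁) + (a₂ ⊗ₜ[ℝ] b, c₂) := by
            simp [TensorProduct.add_tmul, TensorProduct.smul_tmul', Prod.ext_iff]
          simp only [hσφ, he, map_add, map_smul, smul_eq_mul]
      have key : ∀ g : (A × B × C) →₀ ℝ, evAux A B C g ⟨σφ, hmem⟩ = φ (QAux A B C g) := by
        intro g
        induction g using Finsupp.induction_linear with
        | zero => simp
        | add g₁ g₂ h₁ h₂ =>
          simp only [map_add, LinearMap.add_apply, h₁, h₂]
        | single d r =>
          have hs : Finsupp.single d r = r • Finsupp.single d 1 := by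
            rw [Finsupp.smul_single', mul_one]
          rw [hs, map_smul, map_smul, map_smul, LinearMap.smul_apply, evAux_single,
            QAux_single]
      have := hω ⟨σφ, hmem⟩
      rw [Submodule.liftQ_apply, key] at this
      exact this
    have h2 := S_Q A B C f
    rw [hQ, map_zero] at h2
    exact h2.symm
  · intro σ hσ
    apply Subtype.ext
    funext d
    have := hσ (Submodule.Quotient.mk (Finsupp.single d 1))
    rw [Submodule.liftQ_apply, evAux_single] at this
    exact this
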